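/- arXiv:2207.02096 — 3 statements merged into one kernel-verified Lean document; each statement's English description precedes it below -/
import Mathlib

section
/- Let μ and ν be Borel probability measures on ℝ^d with finite second moment. Suppose that for every Borel probability measure ρ on ℝ^d with finite second moment one has W₂²(ν,ρ) − W₂²(μ,ρ) ≤ ∫ |x|² ν(dx) − ∫ |x|² μ(dx). Then μ ≤_c ν, i.e. ∫ f dμ ≤ ∫ f dν for every convex function f : ℝ^d → ℝ integrable with respect to both μ and ν. -/
open MeasureTheory

/-- The squared 2-Wasserstein distance between two measures on `ℝ^d`:
the infimum of `∫ ‖x - y‖²` over all couplings. -/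
noncomputable def W2sq {d : ℕ}
    (μ ν : Measure (EuclideanSpace ℝ (Fin d))) : ℝ :=
  sInf { r : ℝ | ∃ π : Measure (EuclideanSpace ℝ (Fin d) × EuclideanSpace ℝ (Fin d)),
    π.map Prod.fst = μ ∧ π.map Prod.snd = ν ∧ r = ∫ p, ‖p.1 - p.2‖ ^ 2 ∂π }

open Set Filter
open scoped RealInnerProductSpace Topology NNReal

lemma exists_subgradient {E : Type*} [NormedAddCommGroup E] [InnerProductSpace ℝ E]
    [CompleteSpace E] (f : E → ℝ) (hf : ConvexOn ℝ Set.univ f) (hcont : Continuous f) (x₀ : E) :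
    ∃ a : E, ∀ x, f x₀ + ⟪a, x - x₀⟫ ≤ f x := by
  set U : Set (E × ℝ) := {p : E × ℝ | f p.1 < p.2} with hU
  have hUconv : Convex ℝ U := by
    have := hf.convex_strict_epigraph
    simpa [U, Set.mem_univ] using this
  have hUopen : IsOpen U := isOpen_lt (hcont.comp continuous_fst) continuous_snd
  have hx₀ : ((x₀, f x₀) : E × ℝ) ∉ U := by simp [U]
  obtain ⟨ℓ, hℓ⟩ := geometric_hahn_banach_open_point hUconv hUopen hx₀
  set c : ℝ := ℓ (0, 1) with hc
  have hdec : ∀ (x : E) (t : ℝ), ℓ (x, t) = ℓ (x, 0) + t * c := by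
    intro x t
    have h1 : ((x, t) : E × ℝ) = (x, 0) + t • ((0 : E), (1 : ℝ)) := by
      simp [Prod.ext_iff]
    rw [h1, map_add, ContinuousLinearMap.map_smul, smul_eq_mul, hc]
  have hcneg : c < 0 := by
    have h0 := hℓ (x₀, f x₀ + 1) (by simp [U])
    have hA := hdec x₀ (f x₀ + 1)
    have hB := hdec x₀ (f x₀)
    linarith
  have hkey : ∀ x : E, ℓ (x, 0) + f x * c ≤ ℓ (x₀, 0) + f x₀ * c := by
    intro x
    have hx : ∀ ε : ℝ, 0 < ε → ℓ (x, 0) + (f x + ε) * c < ℓ (x₀, 0) + f x₀ * c := by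
      intro ε hε
      have h0 := hℓ (x, f x + ε) (by simp [U, hε])
      have hA := hdec x (f x + ε)
      have hB := hdec x₀ (f x₀)
      linarith
    by_contra hcon
    push_neg at hcon
    set L := ℓ (x, 0) + f x * c with hL
    set K := ℓ (x₀, 0) + f x₀ * c with hK
    have hlk : K < L := hcon
    have hε : (0:ℝ) < (L - K) / (-2 * c) := by
      apply div_pos (by linarith) (by linarith)
    have h6 := hx _ hε
    have h2 : (L - K) / (-2 * c) * (-2 * c) = L - K :=
      div_mul_cancel₀ _ (by nlinarith)
    nlinarith [h6]
  refine ⟨(InnerProductSpace.toDual ℝ E).symm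
    ((-c)⁻¹ • ((ℓ.comp (ContinuousLinearMap.inl ℝ E ℝ)))), fun x => ?_⟩
  have hinner : ∀ z : E, ⟪(InnerProductSpace.toDual ℝ E).symm
      ((-c)⁻¹ • ((ℓ.comp (ContinuousLinearMap.inl ℝ E ℝ)))), z⟫ = (-c)⁻¹ * ℓ (z, 0) := by
    intro z
    rw [InnerProductSpace.toDual_symm_apply]
    simp [ContinuousLinearMap.inl]
  rw [hinner]
  have h1 := hkey x
  have h2 : ℓ (x - x₀, 0) = ℓ (x, 0) - ℓ (x₀, 0) := by
    have h2' : ((x - x₀, (0:ℝ)) : E × ℝ) = (x, 0) - (x₀, 0) := by simp [Prod.ext_iff]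
    rw [h2', map_sub]
  rw [h2]
  have h3 : (0:ℝ) < -c := by linarith
  have h6 : ℓ (x, 0) - ℓ (x₀, 0) ≤ (-c) * f x - (-c) * f x₀ := by linarith
  have h7 := mul_le_mul_of_nonneg_left h6 (inv_nonneg.2 h3.le)
  have h8 : (-c)⁻¹ * ((-c) * f x - (-c) * f x₀) = f x - f x₀ := by
    rw [← mul_sub, ← mul_assoc, inv_mul_cancel₀ h3.ne', one_mul]
  linarith

lemma exists_affine_seq {d : ℕ} (f : EuclideanSpace ℝ (Fin d) → ℝ)
    (hf : ConvexOn ℝ Set.univ f) :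
    ∃ (a : ℕ → EuclideanSpace ℝ (Fin d)) (b : ℕ → ℝ),
      (∀ n x, ⟪a n, x⟫ + b n ≤ f x) ∧
      ∀ (x : EuclideanSpace ℝ (Fin d)) (ε : ℝ), 0 < ε → ∃ n, f x - ε < ⟪a n, x⟫ + b n := by
  have hcont : Continuous f := continuousOn_univ.1 (hf.continuousOn isOpen_univ)
  obtain ⟨u, hu⟩ := TopologicalSpace.exists_dense_seq (EuclideanSpace ℝ (Fin d))
  choose a ha using fun n => exists_subgradient f hf hcont (u n)
  refine ⟨a, fun n => f (u n) - ⟪a n, u n⟫, fun n x => ?_, fun x ε hε => ?_⟩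
  · have := ha n x
    rw [inner_sub_right] at this
    dsimp only
    linarith
  · -- local Lipschitz data at x
    obtain ⟨K, t, ht, hK⟩ := hf.locallyLipschitzOn isOpen_univ (mem_univ x)
    rw [nhdsWithin_univ] at ht
    obtain ⟨r, hr0, hball⟩ := Metric.mem_nhds_iff.1 ht
    have hK' : LipschitzOnWith K f (Metric.ball x r) := hK.mono hball
    set δ : ℝ := min (r / 2) (ε / (2 * K + 1)) with hδdef
    have hδ0 : 0 < δ := lt_min (by linarith) (div_pos hε (by positivity))
    have hδr : δ ≤ r / 2 := min_le_left _ _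
    have hδε : δ ≤ ε / (2 * K + 1) := min_le_right _ _
    obtain ⟨n, hn⟩ := hu.exists_dist_lt x hδ0
    have hun : u n ∈ Metric.ball x r := by
      rw [Metric.mem_ball, dist_comm]
      calc dist x (u n) < δ := hn
        _ ≤ r / 2 := hδr
        _ < r := by linarith
    have hxball : x ∈ Metric.ball x r := Metric.mem_ball_self (by linarith)
    -- bound on ‖a n‖
    have hbound : ∀ v : EuclideanSpace ℝ (Fin d), ⟪a n, v⟫ ≤ K * ‖v‖ := by
      intro v
      rcases eq_or_ne v 0 with rfl | hv
      · simp
      · have hnv : (0:ℝ) < ‖v‖ := norm_pos_iff.2 hv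
        set s : ℝ := (r / 4) / ‖v‖ with hs
        have hs0 : 0 < s := by positivity
        set y := u n + s • v with hy
        have hyball : y ∈ Metric.ball x r := by
          rw [Metric.mem_ball]
          calc dist y x ≤ dist y (u n) + dist (u n) x := dist_triangle _ _ _
            _ = ‖s • v‖ + dist (u n) x := by rw [hy]; simp [dist_eq_norm]
            _ < s * ‖v‖ + δ := by
                rw [norm_smul, Real.norm_eq_abs, abs_of_pos hs0]
                rw [dist_comm]; linarith
            _ = r / 4 + δ := by rw [hs]; field_simp
            _ ≤ r / 4 + r / 2 := by linarith
            _ < r := by linarith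
        have h1 := ha n y
        have h2 : ⟪a n, y - u n⟫ = s * ⟪a n, v⟫ := by
          rw [hy]; simp [inner_smul_right]
        have h3 : f y - f (u n) ≤ K * (s * ‖v‖) := by
          have := (hK'.dist_le_mul y hyball (u n) hun)
          have hd : dist y (u n) = s * ‖v‖ := by
            rw [hy]; simp [dist_eq_norm, norm_smul, Real.norm_eq_abs, abs_of_pos hs0]
          rw [hd] at this
          calc f y - f (u n) ≤ |f y - f (u n)| := le_abs_self _
            _ = dist (f y) (f (u n)) := (Real.dist_eq _ _).symm
            _ ≤ K * (s * ‖v‖) := this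
        rw [h2] at h1
        have : s * ⟪a n, v⟫ ≤ s * (K * ‖v‖) := by nlinarith
        exact le_of_mul_le_mul_left this hs0
    have hnorm : ‖a n‖ ≤ K := by
      rcases eq_or_ne (a n) 0 with h0 | h0
      · simp [h0]
      · have := hbound (a n)
        rw [real_inner_self_eq_norm_sq] at this
        have hpos : (0:ℝ) < ‖a n‖ := norm_pos_iff.2 h0
        nlinarith
    refine ⟨n, ?_⟩
    have h1 : f (u n) + ⟪a n, x - u n⟫ = ⟪a n, x⟫ + (f (u n) - ⟪a n, u n⟫) := by
      rw [inner_sub_right]; ring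
    have h2 : ⟪a n, x - u n⟫ ≥ -(K * δ) := by
      have := abs_real_inner_le_norm (a n) (x - u n)
      have hxy : ‖x - u n‖ ≤ δ := by
        rw [← dist_eq_norm]; exact hn.le
      have : |⟪a n, x - u n⟫| ≤ K * δ := by
        calc |⟪a n, x - u n⟫| ≤ ‖a n‖ * ‖x - u n‖ := abs_real_inner_le_norm _ _
          _ ≤ K * δ := by
              apply mul_le_mul hnorm hxy (norm_nonneg _) K.coe_nonneg
      linarith [neg_abs_le ⟪a n, x - u n⟫]
    have h3 : f x - f (u n) ≤ K * δ := by
      have := hK'.dist_le_mul x hxball (u n) hun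
      have hd : dist x (u n) < δ := hn
      calc f x - f (u n) ≤ |f x - f (u n)| := le_abs_self _
        _ = dist (f x) (f (u n)) := (Real.dist_eq _ _).symm
        _ ≤ K * dist x (u n) := this
        _ ≤ K * δ := by nlinarith [K.coe_nonneg, hd.le]
    have h4 : 2 * (K:ℝ) * δ < ε := by
      have h5 : δ * (2 * (K:ℝ) + 1) ≤ ε := (le_div_iff₀ (by positivity)).1 hδε
      nlinarith [hδ0]
    rw [← h1]
    linarith

lemma W2sq_bddBelow {d : ℕ} (μ ν : Measure (EuclideanSpace ℝ (Fin d))) :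
    BddBelow { r : ℝ | ∃ π : Measure (EuclideanSpace ℝ (Fin d) × EuclideanSpace ℝ (Fin d)),
    π.map Prod.fst = μ ∧ π.map Prod.snd = ν ∧ r = ∫ p, ‖p.1 - p.2‖ ^ 2 ∂π } := by
  refine ⟨0, ?_⟩
  rintro r ⟨π, -, -, rfl⟩
  exact integral_nonneg fun p => by positivity

lemma W2sq_le {d : ℕ} (μ ν : Measure (EuclideanSpace ℝ (Fin d)))
    (π : Measure (EuclideanSpace ℝ (Fin d) × EuclideanSpace ℝ (Fin d)))
    (h1 : π.map Prod.fst = μ) (h2 : π.map Prod.snd = ν) :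
    W2sq μ ν ≤ ∫ p, ‖p.1 - p.2‖ ^ 2 ∂π :=
  csInf_le (W2sq_bddBelow μ ν) ⟨π, h1, h2, rfl⟩

lemma le_W2sq {d : ℕ} (μ ν : Measure (EuclideanSpace ℝ (Fin d)))
    [IsProbabilityMeasure μ] [IsProbabilityMeasure ν] (L : ℝ)
    (h : ∀ π : Measure (EuclideanSpace ℝ (Fin d) × EuclideanSpace ℝ (Fin d)),
      π.map Prod.fst = μ → π.map Prod.snd = ν → L ≤ ∫ p, ‖p.1 - p.2‖ ^ 2 ∂π) :
    L ≤ W2sq μ ν := by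
  refine le_csInf ⟨_, μ.prod ν, by simp, by simp, rfl⟩ ?_
  rintro r ⟨π, h1, h2, rfl⟩
  exact h π h1 h2

lemma norm_le_sq_add_one (x : ℝ) : |x| ≤ x ^ 2 + 1 := by nlinarith [sq_nonneg (|x| - 1), sq_abs x]

lemma key_finite_max {d : ℕ}
    (μ ν : Measure (EuclideanSpace ℝ (Fin d)))
    [IsProbabilityMeasure μ] [IsProbabilityMeasure ν]
    (hμ2 : Integrable (fun x => ‖x‖ ^ 2) μ)
    (hν2 : Integrable (fun x => ‖x‖ ^ 2) ν)
    (hW : ∀ ρ : Measure (EuclideanSpace ℝ (Fin d)), IsProbabilityMeasure ρ →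
        Integrable (fun x => ‖x‖ ^ 2) ρ →
        W2sq ν ρ - W2sq μ ρ ≤ ∫ x, ‖x‖ ^ 2 ∂ν - ∫ x, ‖x‖ ^ 2 ∂μ)
    (s : Finset ℕ) (hs : s.Nonempty) (a : ℕ → EuclideanSpace ℝ (Fin d)) (b : ℕ → ℝ)
    (F : EuclideanSpace ℝ (Fin d) → ℝ)
    (hFdef : ∀ x, F x = s.sup' hs (fun n => ⟪a n, x⟫ + b n)) :
    ∫ x, F x ∂μ ≤ ∫ x, F x ∂ν := by
  classical
  set h : ℕ → EuclideanSpace ℝ (Fin d) → ℝ := fun n x => ⟪a n, x⟫ + b n with hh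
  have hFle : ∀ n ∈ s, ∀ x, h n x ≤ F x := fun n hn x => by
    rw [hFdef x]; exact Finset.le_sup' (fun n => ⟪a n, x⟫ + b n) hn
  have hhmeas : ∀ n, Measurable (h n) := fun n =>
    ((measurable_const.inner measurable_id).add measurable_const)
  -- argmax selection
  have exmax : ∀ x : EuclideanSpace ℝ (Fin d), ∃ n, n ∈ s ∧ ∀ m ∈ s, h m x ≤ h n x := fun x => by
    obtain ⟨n, hn, hn2⟩ := s.exists_max_image (fun n => h n x) hs
    exact ⟨n, hn, hn2⟩
  set i : EuclideanSpace ℝ (Fin d) → ℕ := fun x => Nat.find (exmax x) with hi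
  have hi_spec : ∀ x, i x ∈ s ∧ ∀ m ∈ s, h m x ≤ h (i x) x := fun x => Nat.find_spec (exmax x)
  have hPmeas : ∀ n : ℕ,
      MeasurableSet {x : EuclideanSpace ℝ (Fin d) | n ∈ s ∧ ∀ m ∈ s, h m x ≤ h n x} := by
    intro n
    by_cases hn : n ∈ s
    · have heq : {x : EuclideanSpace ℝ (Fin d) | n ∈ s ∧ ∀ m ∈ s, h m x ≤ h n x}
          = ⋂ m ∈ s, {x : EuclideanSpace ℝ (Fin d) | h m x ≤ h n x} := by
        ext x; simp [hn]
      rw [heq]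
      exact MeasurableSet.biInter s.countable_toSet
        fun m _ => measurableSet_le (hhmeas m) (hhmeas n)
    · have heq : {x : EuclideanSpace ℝ (Fin d) | n ∈ s ∧ ∀ m ∈ s, h m x ≤ h n x} = ∅ := by
        ext x; simp [hn]
      rw [heq]; exact MeasurableSet.empty
  have hi_meas : Measurable i := by
    apply measurable_to_countable'
    intro n
    have heq : i ⁻¹' {n} = {x : EuclideanSpace ℝ (Fin d) | n ∈ s ∧ ∀ m ∈ s, h m x ≤ h n x} ∩
        ⋂ (k : ℕ) (_ : k < n), {x : EuclideanSpace ℝ (Fin d) | k ∈ s ∧ ∀ m ∈ s, h m x ≤ h k x}ᶜ := by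
      ext x
      simp only [mem_preimage, mem_singleton_iff, hi, Nat.find_eq_iff, mem_inter_iff,
        mem_setOf_eq, mem_iInter, mem_compl_iff]
    rw [heq]
    exact (hPmeas n).inter (MeasurableSet.iInter fun k =>
      MeasurableSet.iInter fun _ => (hPmeas k).compl)
  set g : EuclideanSpace ℝ (Fin d) → EuclideanSpace ℝ (Fin d) := fun x => a (i x) with hg
  set β : EuclideanSpace ℝ (Fin d) → ℝ := fun x => b (i x) with hβ
  have hg_meas : Measurable g := measurable_from_top.comp hi_meas
  have hβ_meas : Measurable β := measurable_from_top.comp hi_meas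
  have hF : ∀ x, F x = ⟪g x, x⟫ + β x := by
    intro x
    rw [hFdef x]
    exact le_antisymm (Finset.sup'_le _ _ fun m hm => (hi_spec x).2 m hm)
      (Finset.le_sup' (fun n => h n x) (hi_spec x).1)
  have hFmeas : Measurable F := by
    have heq : F = fun x => ⟪g x, x⟫ + β x := funext hF
    rw [heq]
    exact (hg_meas.inner measurable_id).add hβ_meas
  -- uniform bounds
  obtain ⟨n₀, hn₀⟩ := id hs
  set Ka : ℝ := s.sup' hs (fun n => ‖a n‖) with hKa
  set Kb : ℝ := s.sup' hs (fun n => |b n|) with hKb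
  have hKa0 : 0 ≤ Ka := le_trans (norm_nonneg (a n₀)) (Finset.le_sup' (fun n => ‖a n‖) hn₀)
  have hKb0 : 0 ≤ Kb := le_trans (abs_nonneg (b n₀)) (Finset.le_sup' (fun n => |b n|) hn₀)
  have hga : ∀ x, ‖g x‖ ≤ Ka := fun x => Finset.le_sup' (fun n => ‖a n‖) (hi_spec x).1
  have hβb : ∀ x, |β x| ≤ Kb := fun x => Finset.le_sup' (fun n => |b n|) (hi_spec x).1
  have hbKb : ∀ n ∈ s, |b n| ≤ Kb := fun n hn => Finset.le_sup' (fun n => |b n|) hn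
  have hFbound : ∀ x : EuclideanSpace ℝ (Fin d), |F x| ≤ Ka * ‖x‖ + Kb := by
    intro x
    rw [hF x]
    calc |⟪g x, x⟫ + β x| ≤ |⟪g x, x⟫| + |β x| := abs_add_le _ _
      _ ≤ ‖g x‖ * ‖x‖ + Kb := add_le_add (abs_real_inner_le_norm _ _) (hβb x)
      _ ≤ Ka * ‖x‖ + Kb := by
          have := mul_le_mul_of_nonneg_right (hga x) (norm_nonneg x)
          linarith
  -- the function c
  set c : EuclideanSpace ℝ (Fin d) → ℝ := fun y =>
    if hy : (s.filter (fun n => a n = y)).Nonempty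
    then (s.filter (fun n => a n = y)).sup' hy b else 0 with hc
  have hc_bound : ∀ y, |c y| ≤ Kb := by
    intro y
    rw [hc]
    by_cases hy : (s.filter (fun n => a n = y)).Nonempty
    · simp only [dif_pos hy]
      obtain ⟨m, hm, hm2⟩ := Finset.exists_mem_eq_sup' hy b
      rw [hm2]
      exact hbKb m (Finset.mem_filter.1 hm).1
    · simp only [dif_neg hy]; simpa using hKb0
  have hc_meas : Measurable c := by
    letI : MeasurableSpace (Finset ℕ) := ⊤
    have hT : Measurable (fun y : EuclideanSpace ℝ (Fin d) => s.filter (fun n => a n = y)) := by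
      apply measurable_to_countable'
      intro t
      have heq : (fun y : EuclideanSpace ℝ (Fin d) => s.filter (fun n => a n = y)) ⁻¹' {t}
          = ⋂ n : ℕ, {y : EuclideanSpace ℝ (Fin d) | n ∈ t ↔ (n ∈ s ∧ a n = y)} := by
        ext y
        simp only [mem_preimage, mem_singleton_iff, Finset.ext_iff, Finset.mem_filter,
          mem_iInter, mem_setOf_eq]
        constructor
        · intro hyp n; exact (hyp n).symm
        · intro hyp n; exact (hyp n).symm
      rw [heq]
      refine MeasurableSet.iInter fun n => ?_
      by_cases h1 : n ∈ t <;> by_cases h2 : n ∈ s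
      · have : {y : EuclideanSpace ℝ (Fin d) | n ∈ t ↔ (n ∈ s ∧ a n = y)} = {a n} := by
          ext y; simp [h1, h2, eq_comm]
        rw [this]; exact measurableSet_singleton _
      · have : {y : EuclideanSpace ℝ (Fin d) | n ∈ t ↔ (n ∈ s ∧ a n = y)} = ∅ := by
          ext y; simp [h1, h2]
        rw [this]; exact MeasurableSet.empty
      · have : {y : EuclideanSpace ℝ (Fin d) | n ∈ t ↔ (n ∈ s ∧ a n = y)} = {a n}ᶜ := by
          ext y; simp [h1, h2, eq_comm]
        rw [this]; exact (measurableSet_singleton _).compl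
      · have : {y : EuclideanSpace ℝ (Fin d) | n ∈ t ↔ (n ∈ s ∧ a n = y)} = univ := by
          ext y; simp [h1, h2]
        rw [this]; exact MeasurableSet.univ
    have : c = (fun t : Finset ℕ => if ht : t.Nonempty then t.sup' ht b else 0) ∘
        (fun y : EuclideanSpace ℝ (Fin d) => s.filter (fun n => a n = y)) := by
      funext y; rfl
    rw [this]
    exact measurable_from_top.comp hT
  have hc1 : ∀ y : EuclideanSpace ℝ (Fin d), (∃ n ∈ s, a n = y) →
      ∀ x, ⟪x, y⟫ + c y ≤ F x := by
    rintro y ⟨n, hn, rfl⟩ x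
    have hy : (s.filter (fun m => a m = a n)).Nonempty := ⟨n, Finset.mem_filter.2 ⟨hn, rfl⟩⟩
    rw [hc]
    simp only [dif_pos hy]
    obtain ⟨m, hm, hm2⟩ := Finset.exists_mem_eq_sup' hy b
    rw [hm2]
    obtain ⟨hms, hma⟩ := Finset.mem_filter.1 hm
    have := hFle m hms x
    rw [hh] at this
    simp only at this
    rw [← hma, real_inner_comm]
    exact this
  have hc2 : ∀ x, β x ≤ c (g x) := by
    intro x
    have hy : (s.filter (fun m => a m = g x)).Nonempty :=
      ⟨i x, Finset.mem_filter.2 ⟨(hi_spec x).1, rfl⟩⟩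
    rw [hc]
    simp only [dif_pos hy]
    have hmem : i x ∈ s.filter (fun m => a m = g x) :=
      Finset.mem_filter.2 ⟨(hi_spec x).1, rfl⟩
    exact Finset.le_sup' b hmem
  -- the measure ρ
  set ρ : Measure (EuclideanSpace ℝ (Fin d)) := μ.map g with hρ
  haveI hρP : IsProbabilityMeasure ρ := Measure.isProbabilityMeasure_map hg_meas.aemeasurable
  -- integrability facts
  have hnorm_int_μ : Integrable (fun x => ‖x‖) μ := by
    refine (hμ2.add (integrable_const 1)).mono' continuous_norm.aestronglyMeasurable
      (ae_of_all _ fun x => ?_)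
    simpa using norm_le_sq_add_one ‖x‖
  have hnorm_int_ν : Integrable (fun x => ‖x‖) ν := by
    refine (hν2.add (integrable_const 1)).mono' continuous_norm.aestronglyMeasurable
      (ae_of_all _ fun x => ?_)
    simpa using norm_le_sq_add_one ‖x‖
  have hg2_int : Integrable (fun x => ‖g x‖ ^ 2) μ := by
    refine (integrable_const (Ka ^ 2)).mono'
      ((hg_meas.norm.pow_const 2).aestronglyMeasurable) (ae_of_all _ fun x => ?_)
    rw [Real.norm_eq_abs, abs_of_nonneg (by positivity)]
    exact pow_le_pow_left₀ (norm_nonneg _) (hga x) 2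
  have hρ2 : Integrable (fun y => ‖y‖ ^ 2) ρ := by
    rw [hρ]
    refine (integrable_map_measure
      ((continuous_norm.pow 2).aestronglyMeasurable) hg_meas.aemeasurable).2 ?_
    simpa [Function.comp_def, Pi.pow_apply] using hg2_int
  have hinner_g_int : Integrable (fun x => ⟪x, g x⟫) μ := by
    refine (hnorm_int_μ.const_mul Ka).mono'
      ((measurable_id.inner hg_meas).aestronglyMeasurable) (ae_of_all _ fun x => ?_)
    rw [Real.norm_eq_abs]
    calc |⟪x, g x⟫| ≤ ‖x‖ * ‖g x‖ := abs_real_inner_le_norm _ _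
      _ ≤ Ka * ‖x‖ := by nlinarith [hga x, norm_nonneg x]
  have hβ_int : Integrable β μ :=
    (integrable_const Kb).mono' hβ_meas.aestronglyMeasurable
      (ae_of_all _ fun x => by rw [Real.norm_eq_abs]; exact hβb x)
  have hcg_int : Integrable (fun x => c (g x)) μ :=
    (integrable_const Kb).mono' ((hc_meas.comp hg_meas).aestronglyMeasurable)
      (ae_of_all _ fun x => by rw [Real.norm_eq_abs]; exact hc_bound _)
  have hcρ_int : Integrable c ρ :=
    (integrable_const Kb).mono' hc_meas.aestronglyMeasurable
      (ae_of_all _ fun y => by rw [Real.norm_eq_abs]; exact hc_bound _)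
  have hF_int_μ : Integrable F μ := by
    refine ((hnorm_int_μ.const_mul Ka).add (integrable_const Kb)).mono'
      hFmeas.aestronglyMeasurable (ae_of_all _ fun x => ?_)
    rw [Real.norm_eq_abs]
    simpa using hFbound x
  have hF_int_ν : Integrable F ν := by
    refine ((hnorm_int_ν.const_mul Ka).add (integrable_const Kb)).mono'
      hFmeas.aestronglyMeasurable (ae_of_all _ fun x => ?_)
    rw [Real.norm_eq_abs]
    simpa using hFbound x
  -- upper bound for W2sq μ ρ
  have hpair_meas : Measurable (fun x : EuclideanSpace ℝ (Fin d) => (x, g x)) :=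
    measurable_id.prodMk hg_meas
  have hπ0fst : (μ.map (fun x => (x, g x))).map Prod.fst = μ := by
    rw [Measure.map_map measurable_fst hpair_meas]
    have : Prod.fst ∘ (fun x : EuclideanSpace ℝ (Fin d) => (x, g x)) = id := rfl
    rw [this, Measure.map_id]
  have hπ0snd : (μ.map (fun x => (x, g x))).map Prod.snd = ρ := by
    rw [Measure.map_map measurable_snd hpair_meas]
    rfl
  have hUval : ∫ p, ‖p.1 - p.2‖ ^ 2 ∂(μ.map (fun x => (x, g x)))
      = ∫ x, ‖x - g x‖ ^ 2 ∂μ := by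
    rw [integral_map hpair_meas.aemeasurable]
    exact (((continuous_fst.sub continuous_snd).norm.pow 2).aestronglyMeasurable)
  have hW2μρ_le : W2sq μ ρ ≤ ∫ x, ‖x - g x‖ ^ 2 ∂μ := by
    rw [← hUval]
    exact W2sq_le μ ρ _ hπ0fst hπ0snd
  have hU : ∫ x, ‖x - g x‖ ^ 2 ∂μ
      = ∫ x, ‖x‖ ^ 2 ∂μ - 2 * ∫ x, ⟪x, g x⟫ ∂μ + ∫ x, ‖g x‖ ^ 2 ∂μ := by
    have heq : (fun x : EuclideanSpace ℝ (Fin d) => ‖x - g x‖ ^ 2)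
        = fun x => ‖x‖ ^ 2 - 2 * ⟪x, g x⟫ + ‖g x‖ ^ 2 := funext fun x => norm_sub_sq_real x (g x)
    have ia : Integrable (fun x => ‖x‖ ^ 2 - 2 * ⟪x, g x⟫) μ := by
      exact hμ2.sub (hinner_g_int.const_mul 2)
    have ib : Integrable (fun x => 2 * ⟪x, g x⟫) μ := by
      exact hinner_g_int.const_mul 2
    rw [heq, integral_add ia hg2_int, integral_sub hμ2 ib, integral_const_mul 2 _]
  have hGval : ∫ y, ‖y‖ ^ 2 ∂ρ = ∫ x, ‖g x‖ ^ 2 ∂μ := by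
    rw [hρ, integral_map (f := fun y => ‖y‖ ^ 2) hg_meas.aemeasurable ((continuous_norm.pow 2).aestronglyMeasurable)]
  have hCval : ∫ y, c y ∂ρ = ∫ x, c (g x) ∂μ := by
    rw [hρ, integral_map hg_meas.aemeasurable hc_meas.aestronglyMeasurable]
  -- lower bound for W2sq ν ρ
  have hlow : (∫ x, ‖x‖ ^ 2 ∂ν) + (∫ x, ‖g x‖ ^ 2 ∂μ) - 2 * ∫ x, F x ∂ν
      + 2 * ∫ x, c (g x) ∂μ ≤ W2sq ν ρ := by
    apply le_W2sq
    intro π h1 h2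
    haveI hπP : IsProbabilityMeasure π := by
      constructor
      have h3 : (π.map Prod.fst) univ = π univ := by
        rw [Measure.map_apply measurable_fst MeasurableSet.univ]; rfl
      rw [h1] at h3
      rw [← h3]
      exact measure_univ
    have hi1 : Integrable (fun p : EuclideanSpace ℝ (Fin d) × EuclideanSpace ℝ (Fin d)
        => ‖p.1‖ ^ 2) π := by
      have := (integrable_map_measure ((continuous_norm.pow 2).aestronglyMeasurable)
        measurable_fst.aemeasurable).1 (by rw [h1]; exact hν2)
      simpa [Function.comp_def, Pi.pow_apply] using this
    have hi2 : Integrable (fun p : EuclideanSpace ℝ (Fin d) × EuclideanSpace ℝ (Fin d)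
        => ‖p.2‖ ^ 2) π := by
      have := (integrable_map_measure ((continuous_norm.pow 2).aestronglyMeasurable)
        measurable_snd.aemeasurable).1 (by rw [h2]; exact hρ2)
      simpa [Function.comp_def, Pi.pow_apply] using this
    have hiF : Integrable (fun p : EuclideanSpace ℝ (Fin d) × EuclideanSpace ℝ (Fin d)
        => F p.1) π := by
      have := (integrable_map_measure hFmeas.aestronglyMeasurable
        measurable_fst.aemeasurable).1 (by rw [h1]; exact hF_int_ν)
      simpa [Function.comp_def, Pi.pow_apply] using this
    have hic : Integrable (fun p : EuclideanSpace ℝ (Fin d) × EuclideanSpace ℝ (Fin d)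
        => c p.2) π := by
      have := (integrable_map_measure hc_meas.aestronglyMeasurable
        measurable_snd.aemeasurable).1 (by rw [h2]; exact hcρ_int)
      simpa [Function.comp_def, Pi.pow_apply] using this
    have hiinner : Integrable (fun p : EuclideanSpace ℝ (Fin d) × EuclideanSpace ℝ (Fin d)
        => ⟪p.1, p.2⟫) π := by
      refine (hi1.add hi2).mono' ((measurable_fst.inner measurable_snd).aestronglyMeasurable)
        (ae_of_all _ fun p => ?_)
      rw [Real.norm_eq_abs]
      have h4 : |⟪p.1, p.2⟫| ≤ ‖p.1‖ * ‖p.2‖ := abs_real_inner_le_norm _ _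
      have h5 : ‖p.1‖ * ‖p.2‖ ≤ ‖p.1‖ ^ 2 + ‖p.2‖ ^ 2 := by
        nlinarith [sq_nonneg (‖p.1‖ - ‖p.2‖), norm_nonneg p.1, norm_nonneg p.2]
      simpa using h4.trans h5
    -- a.e. Young inequality
    have hgood : MeasurableSet {y : EuclideanSpace ℝ (Fin d) | ∃ n ∈ s, a n = y} := by
      have heq : {y : EuclideanSpace ℝ (Fin d) | ∃ n ∈ s, a n = y} = ⋃ n ∈ s, {a n} := by
        ext y; simp [eq_comm]
      rw [heq]
      exact MeasurableSet.biUnion s.countable_toSet fun _ _ => measurableSet_singleton _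
    have hρbad : ρ {y : EuclideanSpace ℝ (Fin d) | ∃ n ∈ s, a n = y}ᶜ = 0 := by
      rw [hρ, Measure.map_apply hg_meas hgood.compl]
      have heq : g ⁻¹' {y : EuclideanSpace ℝ (Fin d) | ∃ n ∈ s, a n = y}ᶜ = ∅ := by
        ext x
        simp only [mem_preimage, mem_compl_iff, mem_setOf_eq, mem_empty_iff_false,
          iff_false, not_not]
        exact ⟨i x, (hi_spec x).1, rfl⟩
      rw [heq, measure_empty]
    have hae2 : ∀ᵐ p : EuclideanSpace ℝ (Fin d) × EuclideanSpace ℝ (Fin d) ∂π,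
        ∃ n ∈ s, a n = p.2 := by
      rw [ae_iff]
      have heq : {p : EuclideanSpace ℝ (Fin d) × EuclideanSpace ℝ (Fin d)
          | ¬∃ n ∈ s, a n = p.2}
          = Prod.snd ⁻¹' {y : EuclideanSpace ℝ (Fin d) | ∃ n ∈ s, a n = y}ᶜ := rfl
      rw [heq, ← Measure.map_apply measurable_snd hgood.compl, h2]
      exact hρbad
    have hae : ∀ᵐ p : EuclideanSpace ℝ (Fin d) × EuclideanSpace ℝ (Fin d) ∂π,
        ⟪p.1, p.2⟫ ≤ F p.1 - c p.2 := by
      filter_upwards [hae2] with p hp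
      have := hc1 p.2 hp p.1
      linarith
    have hint : ∫ p, ⟪p.1, p.2⟫ ∂π ≤ ∫ x, F x ∂ν - ∫ x, c (g x) ∂μ := by
      have h6 : ∫ p, ⟪p.1, p.2⟫ ∂π ≤ ∫ p, (F p.1 - c p.2) ∂π :=
        integral_mono_ae hiinner (hiF.sub hic) hae
      have h7 : ∫ p, (F p.1 - c p.2) ∂π = (∫ p, F p.1 ∂π) - ∫ p, c p.2 ∂π :=
        integral_sub hiF hic
      have h8 : ∫ p, F p.1 ∂π = ∫ x, F x ∂ν := by
        rw [← h1, integral_map measurable_fst.aemeasurable]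
        rw [h1]; exact hFmeas.aestronglyMeasurable
      have h9 : ∫ p, c p.2 ∂π = ∫ x, c (g x) ∂μ := by
        rw [← hCval, ← h2, integral_map measurable_snd.aemeasurable]
        rw [h2]; exact hc_meas.aestronglyMeasurable
      rw [h7, h8, h9] at h6
      exact h6
    have e1 : ∫ p, ‖p.1‖ ^ 2 ∂π = ∫ x, ‖x‖ ^ 2 ∂ν := by
      rw [← h1, integral_map measurable_fst.aemeasurable]
      rw [h1]; exact (continuous_norm.pow 2).aestronglyMeasurable
    have e2 : ∫ p, ‖p.2‖ ^ 2 ∂π = ∫ x, ‖g x‖ ^ 2 ∂μ := by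
      rw [← hGval, ← h2, integral_map measurable_snd.aemeasurable]
      rw [h2]; exact (continuous_norm.pow 2).aestronglyMeasurable
    have hexp : ∫ p, ‖p.1 - p.2‖ ^ 2 ∂π
        = ∫ p, ‖p.1‖ ^ 2 ∂π - 2 * ∫ p, ⟪p.1, p.2⟫ ∂π + ∫ p, ‖p.2‖ ^ 2 ∂π := by
      have heq : (fun p : EuclideanSpace ℝ (Fin d) × EuclideanSpace ℝ (Fin d)
          => ‖p.1 - p.2‖ ^ 2)
          = fun p => ‖p.1‖ ^ 2 - 2 * ⟪p.1, p.2⟫ + ‖p.2‖ ^ 2 :=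
        funext fun p => norm_sub_sq_real p.1 p.2
      have ia : Integrable (fun p : EuclideanSpace ℝ (Fin d) × EuclideanSpace ℝ (Fin d)
          => ‖p.1‖ ^ 2 - 2 * ⟪p.1, p.2⟫) π := by
        exact hi1.sub (hiinner.const_mul 2)
      have ib : Integrable (fun p : EuclideanSpace ℝ (Fin d) × EuclideanSpace ℝ (Fin d)
          => 2 * ⟪p.1, p.2⟫) π := by
        exact hiinner.const_mul 2
      rw [heq, integral_add ia hi2, integral_sub hi1 ib, integral_const_mul 2 _]
    rw [hexp, e1, e2]
    nlinarith [hint]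
  -- conclusion
  have hWineq := hW ρ hρP hρ2
  have hFμ : ∫ x, F x ∂μ = (∫ x, ⟪x, g x⟫ ∂μ) + ∫ x, β x ∂μ := by
    have heq : F = fun x => ⟪x, g x⟫ + β x := by
      funext x; rw [hF x, real_inner_comm]
    rw [heq, integral_add hinner_g_int hβ_int]
  have hβC : ∫ x, β x ∂μ ≤ ∫ x, c (g x) ∂μ := integral_mono hβ_int hcg_int hc2
  have hFν_ge : (∫ x, ⟪x, g x⟫ ∂μ) + ∫ x, c (g x) ∂μ ≤ ∫ x, F x ∂ν := by
    have h10 := hW2μρ_le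
    rw [hU] at h10
    linarith [hlow, hWineq]
  rw [hFμ]
  linarith

lemma continuous_sup' {γ : Type*} [TopologicalSpace γ] (t : Finset ℕ) (ht : t.Nonempty)
    (h : ℕ → γ → ℝ) (hc : ∀ n, Continuous (h n)) :
    Continuous fun x => t.sup' ht (fun n => h n x) := by
  induction ht using Finset.Nonempty.cons_induction with
  | singleton n => simpa using hc n
  | cons n t hnt htne ih =>
      have heq : (fun x => (Finset.cons n t hnt).sup' (Finset.cons_nonempty hnt) (fun m => h m x))
          = fun x => max (h n x) (t.sup' htne (fun m => h m x)) := by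
        funext x
        rw [Finset.sup'_cons htne]
      rw [heq]
      exact (hc n).max ih


theorem wasserstein_ineq_implies_convex_order {d : ℕ}
    (μ ν : Measure (EuclideanSpace ℝ (Fin d)))
    [IsProbabilityMeasure μ] [IsProbabilityMeasure ν]
    (hμ2 : Integrable (fun x => ‖x‖ ^ 2) μ)
    (hν2 : Integrable (fun x => ‖x‖ ^ 2) ν)
    (hW : ∀ ρ : Measure (EuclideanSpace ℝ (Fin d)), IsProbabilityMeasure ρ →
        Integrable (fun x => ‖x‖ ^ 2) ρ →
        W2sq ν ρ - W2sq μ ρ ≤ ∫ x, ‖x‖ ^ 2 ∂ν - ∫ x, ‖x‖ ^ 2 ∂μ) :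
    ∀ f : EuclideanSpace ℝ (Fin d) → ℝ, ConvexOn ℝ Set.univ f →
        Integrable f μ → Integrable f ν → ∫ x, f x ∂μ ≤ ∫ x, f x ∂ν := by
  intro f hconv hfμ hfν
  obtain ⟨a, b, hmin, happrox⟩ := exists_affine_seq f hconv
  set FN : ℕ → EuclideanSpace ℝ (Fin d) → ℝ := fun N x =>
    (Finset.range (N + 1)).sup' Finset.nonempty_range_add_one (fun n => ⟪a n, x⟫ + b n) with hFN
  have hkey : ∀ N, ∫ x, FN N x ∂μ ≤ ∫ x, FN N x ∂ν := fun N =>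
    key_finite_max μ ν hμ2 hν2 hW _ _ a b (FN N) (fun x => rfl)
  have hFNcont : ∀ N, Continuous (FN N) := fun N =>
    continuous_sup' _ _ _ (fun n => (continuous_const.inner continuous_id).add continuous_const)
  have hFNle : ∀ N x, FN N x ≤ f x := fun N x => by
    rw [hFN]
    exact Finset.sup'_le _ _ fun n _ => hmin n x
  have hFNge : ∀ N x, ⟪a 0, x⟫ + b 0 ≤ FN N x := fun N x => by
    rw [hFN]
    exact Finset.le_sup' (fun n => ⟪a n, x⟫ + b n) (Finset.mem_range.2 (Nat.succ_pos N))
  have hmono : ∀ x, Monotone fun N => FN N x := by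
    intro x N M hNM
    simp only [hFN]
    exact Finset.sup'_le _ _ fun n hn =>
      Finset.le_sup' (fun n => ⟪a n, x⟫ + b n) (Finset.mem_range.2
        (lt_of_lt_of_le (Finset.mem_range.1 hn) (by omega)))
  have htendsto : ∀ x, Tendsto (fun N => FN N x) atTop (𝓝 (f x)) := by
    intro x
    rw [Metric.tendsto_atTop]
    intro ε hε
    obtain ⟨n, hn⟩ := happrox x ε hε
    refine ⟨n, fun N hN => ?_⟩
    have h1 : ⟪a n, x⟫ + b n ≤ FN N x := by
      rw [hFN]
      exact Finset.le_sup' (fun n => ⟪a n, x⟫ + b n) (Finset.mem_range.2 (by omega))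
    have h2 : FN N x ≤ f x := hFNle N x
    rw [Real.dist_eq, abs_of_nonpos (by linarith)]
    linarith
  -- integrability of FN
  have haff_int : ∀ (κ : Measure (EuclideanSpace ℝ (Fin d))) (_ : IsProbabilityMeasure κ),
      Integrable (fun x => ‖x‖ ^ 2) κ → Integrable (fun x => ⟪a 0, x⟫ + b 0) κ := by
    intro κ hκ hκ2
    have hnorm : Integrable (fun x => ‖x‖) κ := by
      refine (hκ2.add (integrable_const 1)).mono' continuous_norm.aestronglyMeasurable
        (ae_of_all _ fun x => ?_)
      simpa using norm_le_sq_add_one ‖x‖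
    refine ((hnorm.const_mul ‖a 0‖).add (integrable_const |b 0|)).mono'
      ((continuous_const.inner continuous_id).add continuous_const).aestronglyMeasurable
      (ae_of_all _ fun x => ?_)
    rw [Real.norm_eq_abs]
    have h1 : |⟪a 0, x⟫ + b 0| ≤ |⟪a 0, x⟫| + |b 0| := abs_add_le _ _
    have h2 : |⟪a 0, x⟫| ≤ ‖a 0‖ * ‖x‖ := abs_real_inner_le_norm _ _
    show |⟪a 0, x⟫ + b 0| ≤ ‖a 0‖ * ‖x‖ + |b 0|
    linarith
  have hFN_int : ∀ (κ : Measure (EuclideanSpace ℝ (Fin d))) (_ : IsProbabilityMeasure κ),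
      Integrable (fun x => ‖x‖ ^ 2) κ → Integrable f κ → ∀ N, Integrable (FN N) κ := by
    intro κ hκ hκ2 hfκ N
    refine (hfκ.abs.add (haff_int κ hκ hκ2).abs).mono'
      (hFNcont N).aestronglyMeasurable (ae_of_all _ fun x => ?_)
    rw [Real.norm_eq_abs]
    have h1 := hFNle N x
    have h2 := hFNge N x
    show |FN N x| ≤ |f x| + |⟪a 0, x⟫ + b 0|
    rw [abs_le]
    constructor
    · have h3 := neg_abs_le (⟪a 0, x⟫ + b 0)
      have h4 := le_abs_self (f x)
      nlinarith [abs_nonneg (f x), abs_nonneg (⟪a 0, x⟫ + b 0)]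
    · have h4 := le_abs_self (f x)
      nlinarith [abs_nonneg (⟪a 0, x⟫ + b 0)]
  have hμlim : Tendsto (fun N => ∫ x, FN N x ∂μ) atTop (𝓝 (∫ x, f x ∂μ)) :=
    integral_tendsto_of_tendsto_of_monotone (hFN_int μ inferInstance hμ2 hfμ) hfμ
      (ae_of_all _ hmono) (ae_of_all _ htendsto)
  have hνlim : Tendsto (fun N => ∫ x, FN N x ∂ν) atTop (𝓝 (∫ x, f x ∂ν)) :=
    integral_tendsto_of_tendsto_of_monotone (hFN_int ν inferInstance hν2 hfν) hfν
      (ae_of_all _ hmono) (ae_of_all _ htendsto)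
  exact le_of_tendsto_of_tendsto' hμlim hνlim hkey
end

section
/- Let μ and ν be Borel probability measures on ℝ^d with finite second moment. If ∫ f dμ ≤ ∫ f dν holds for every convex function f : ℝ^d → ℝ of at most linear growth (i.e. there exists a constant C with |f(x)| ≤ C(1 + |x|) for all x), then ∫ f dμ ≤ ∫ f dν holds for every convex function f : ℝ^d → ℝ that is integrable with respect to both μ and ν; in other words, to verify the convex order μ ≤_c ν it suffices to test against convex functions of at most linear growth. -/
open MeasureTheory Filter Topology

set_option maxHeartbeats 800000 in
theorem convex_order_of_linear_growth_tests {d : ℕ}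
    (μ ν : Measure (EuclideanSpace ℝ (Fin d)))
    [IsProbabilityMeasure μ] [IsProbabilityMeasure ν]
    (hμ2 : Integrable (fun x => ‖x‖ ^ 2) μ)
    (hν2 : Integrable (fun x => ‖x‖ ^ 2) ν)
    (h : ∀ f : EuclideanSpace ℝ (Fin d) → ℝ, ConvexOn ℝ Set.univ f →
        (∃ C : ℝ, ∀ x, |f x| ≤ C * (1 + ‖x‖)) →
        ∫ x, f x ∂μ ≤ ∫ x, f x ∂ν) :
    ∀ f : EuclideanSpace ℝ (Fin d) → ℝ, ConvexOn ℝ Set.univ f →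
        Integrable f μ → Integrable f ν → ∫ x, f x ∂μ ≤ ∫ x, f x ∂ν := by
  intro f hf hfμ hfν
  classical
  have hcont : Continuous f := hf.locallyLipschitz.continuous
  -- a bound on the closed unit ball
  obtain ⟨M, hM⟩ : ∃ M, ∀ y ∈ Metric.closedBall (0 : EuclideanSpace ℝ (Fin d)) 1, ‖f y‖ ≤ M :=
    (isCompact_closedBall 0 1).exists_bound_of_continuousOn hcont.continuousOn
  have hM0 : 0 ≤ M := le_trans (norm_nonneg _) (hM 0 (by simp))
  -- a global linear lower bound on f
  have hlow : ∀ y : EuclideanSpace ℝ (Fin d), -(M * (1 + 2 * ‖y‖)) ≤ f y := by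
    intro y
    rcases le_or_gt ‖y‖ 1 with hy | hy
    · have h1 : ‖f y‖ ≤ M := hM y (by simpa [Metric.mem_closedBall, dist_zero_right] using hy)
      rw [Real.norm_eq_abs, abs_le] at h1
      nlinarith [norm_nonneg y]
    · have ht0 : (0:ℝ) < ‖y‖ := lt_trans one_pos hy
      set t : ℝ := ‖y‖ with htdef
      have hu1 : ‖t⁻¹ • y‖ = 1 := by
        rw [norm_smul, Real.norm_eq_abs, abs_of_nonneg (inv_nonneg.2 ht0.le)]
        field_simp
        exact htdef.symm
      have hu : ‖f (t⁻¹ • y)‖ ≤ M := hM _ (by simp [Metric.mem_closedBall, dist_zero_right, hu1])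
      have hf0 : ‖f 0‖ ≤ M := hM 0 (by simp)
      have ha : (0:ℝ) ≤ 1 - t⁻¹ := by
        rw [sub_nonneg]
        exact inv_le_one_of_one_le₀ hy.le
      have hb : (0:ℝ) ≤ t⁻¹ := inv_nonneg.2 ht0.le
      have hconv := hf.2 (Set.mem_univ (0 : EuclideanSpace ℝ (Fin d))) (Set.mem_univ y)
        ha hb (by ring)
      rw [smul_zero, zero_add] at hconv
      -- hconv : f (t⁻¹ • y) ≤ (1 - t⁻¹) * f 0 + t⁻¹ * f y
      rw [smul_eq_mul, smul_eq_mul] at hconv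
      rw [Real.norm_eq_abs, abs_le] at hu hf0
      have hmul := mul_le_mul_of_nonneg_left hconv ht0.le
      have hexp : t * ((1 - t⁻¹) * f 0 + t⁻¹ * f y) = (t - 1) * f 0 + f y := by
        field_simp
      rw [hexp] at hmul
      have hb1 := mul_le_mul_of_nonneg_left hu.1 ht0.le
      have hb2 := mul_le_mul_of_nonneg_left hf0.2 (by linarith : (0:ℝ) ≤ t - 1)
      nlinarith [hb1, hb2]
  -- the Lipschitz regularizations
  set F : ℕ → EuclideanSpace ℝ (Fin d) → ℝ :=
    fun n x => ⨅ y : EuclideanSpace ℝ (Fin d), f y + n * ‖x - y‖ with hFdef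
  have key : ∀ n : ℕ, 2*M ≤ n → ∀ x y : EuclideanSpace ℝ (Fin d),
      -M - 2*M*‖x‖ ≤ f y + n * ‖x - y‖ := by
    intro n hn x y
    have h1 : ‖y‖ ≤ ‖x‖ + ‖x - y‖ := by
      calc ‖y‖ = ‖x - (x - y)‖ := by congr 1; abel
      _ ≤ ‖x‖ + ‖x - y‖ := norm_sub_le _ _
    have h2 := hlow y
    nlinarith [norm_nonneg (x - y), mul_nonneg (sub_nonneg.2 hn) (norm_nonneg (x - y)),
      mul_le_mul_of_nonneg_left h1 (by linarith : (0:ℝ) ≤ 2*M)]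
  have hbdd : ∀ n : ℕ, 2*M ≤ n → ∀ x, BddBelow (Set.range fun y => f y + n * ‖x - y‖) := by
    intro n hn x
    exact ⟨-M - 2*M*‖x‖, by rintro _ ⟨y, rfl⟩; exact key n hn x y⟩
  have hFle : ∀ n : ℕ, 2*M ≤ n → ∀ x, F n x ≤ f x := by
    intro n hn x
    have := ciInf_le (hbdd n hn x) x
    simpa using this
  have hFge : ∀ n : ℕ, 2*M ≤ n → ∀ x, -M - 2*M*‖x‖ ≤ F n x := by
    intro n hn x
    exact le_ciInf (key n hn x)
  have hf0M : f 0 ≤ M := le_trans (le_abs_self _) (by simpa [Real.norm_eq_abs] using hM 0 (by simp))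
  have hgrow : ∀ n : ℕ, 2*M ≤ n → ∀ x, |F n x| ≤ (3*M + n) * (1 + ‖x‖) := by
    intro n hn x
    have hub : F n x ≤ M + n * ‖x‖ := by
      have h1 := ciInf_le (hbdd n hn x) 0
      simp only [sub_zero] at h1
      linarith
    have hlb := hFge n hn x
    have hn0 : (0:ℝ) ≤ n := n.cast_nonneg
    rw [abs_le]
    constructor <;> nlinarith [norm_nonneg x, mul_nonneg hn0 (norm_nonneg x),
      mul_nonneg hM0 (norm_nonneg x)]
  have hFconv : ∀ n : ℕ, 2*M ≤ n → ConvexOn ℝ Set.univ (F n) := by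
    intro n hn
    refine ⟨convex_univ, fun x _ z _ a b ha hb hab => ?_⟩
    refine le_of_forall_pos_le_add fun ε hε => ?_
    obtain ⟨y₁, hy₁⟩ := exists_lt_of_ciInf_lt (show F n x < F n x + ε by linarith)
    obtain ⟨y₂, hy₂⟩ := exists_lt_of_ciInf_lt (show F n z < F n z + ε by linarith)
    have hle : F n (a • x + b • z) ≤
        f (a • y₁ + b • y₂) + n * ‖(a • x + b • z) - (a • y₁ + b • y₂)‖ :=
      ciInf_le (hbdd n hn _) _
    have hfc : f (a • y₁ + b • y₂) ≤ a * f y₁ + b * f y₂ :=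
      hf.2 (Set.mem_univ _) (Set.mem_univ _) ha hb hab
    have hnorm : ‖(a • x + b • z) - (a • y₁ + b • y₂)‖ ≤ a * ‖x - y₁‖ + b * ‖z - y₂‖ := by
      have heq : (a • x + b • z) - (a • y₁ + b • y₂) = a • (x - y₁) + b • (z - y₂) := by
        rw [smul_sub, smul_sub]; abel
      rw [heq]
      calc ‖a • (x - y₁) + b • (z - y₂)‖ ≤ ‖a • (x - y₁)‖ + ‖b • (z - y₂)‖ := norm_add_le _ _
        _ = a * ‖x - y₁‖ + b * ‖z - y₂‖ := by
            rw [norm_smul, norm_smul, Real.norm_eq_abs, Real.norm_eq_abs,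
              abs_of_nonneg ha, abs_of_nonneg hb]
    have hn0 : (0:ℝ) ≤ n := n.cast_nonneg
    have hmul := mul_le_mul_of_nonneg_left hnorm hn0
    have h1 : a * (f y₁ + n * ‖x - y₁‖) ≤ a * (F n x + ε) :=
      mul_le_mul_of_nonneg_left hy₁.le ha
    have h2 : b * (f y₂ + n * ‖z - y₂‖) ≤ b * (F n z + ε) :=
      mul_le_mul_of_nonneg_left hy₂.le hb
    have hε' : a * ε + b * ε = ε := by rw [← add_mul, hab, one_mul]
    simp only [smul_eq_mul]
    nlinarith [hle, hfc, hmul, h1, h2, hε']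
  have hFmono : ∀ m n : ℕ, 2*M ≤ m → m ≤ n → ∀ x, F m x ≤ F n x := by
    intro m n hm hmn x
    refine ciInf_mono (hbdd m hm x) fun y => ?_
    have hc : (m:ℝ) ≤ n := Nat.cast_le.2 hmn
    nlinarith [norm_nonneg (x - y)]
  set n₀ : ℕ := ⌈2*M⌉₊ with hn₀def
  have hn₀ : ∀ k : ℕ, 2*M ≤ ((n₀ + k : ℕ) : ℝ) := by
    intro k
    refine le_trans (Nat.le_ceil _) ?_
    exact_mod_cast Nat.le_add_right n₀ k
  -- pointwise convergence
  have hFtendsto : ∀ x, Tendsto (fun k : ℕ => F (n₀ + k) x) atTop (𝓝 (f x)) := by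
    intro x
    rw [tendsto_order]
    constructor
    · intro a ha
      set a' : ℝ := (a + f x) / 2 with ha'def
      have ha'1 : a < a' := by rw [ha'def]; linarith
      have ha'2 : a' < f x := by rw [ha'def]; linarith
      have hev : ∀ᶠ y in 𝓝 x, a' < f y := hcont.continuousAt.eventually (eventually_gt_nhds ha'2)
      obtain ⟨δ, hδ, hball⟩ := Metric.eventually_nhds_iff.1 hev
      obtain ⟨K, hK⟩ := exists_nat_ge ((a' + M + 2*M*‖x‖)/δ + 2*M)
      refine eventually_atTop.2 ⟨K, fun k hk => ?_⟩
      have hn := hn₀ k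
      have hnK : ((a' + M + 2*M*‖x‖)/δ + 2*M) ≤ ((n₀ + k : ℕ) : ℝ) := by
        refine hK.trans ?_
        exact_mod_cast hk.trans (Nat.le_add_left k n₀)
      refine lt_of_lt_of_le ha'1 (le_ciInf fun y => ?_)
      rcases lt_or_ge (dist y x) δ with hyx | hyx
      · have hfy := hball hyx
        have : (0:ℝ) ≤ ((n₀ + k : ℕ) : ℝ) * ‖x - y‖ :=
          mul_nonneg (by positivity) (norm_nonneg _)
        linarith
      · have hdist : δ ≤ ‖x - y‖ := by
          rwa [dist_comm, dist_eq_norm] at hyx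
        have h1 : ‖y‖ ≤ ‖x‖ + ‖x - y‖ := by
          calc ‖y‖ = ‖x - (x - y)‖ := by congr 1; abel
          _ ≤ ‖x‖ + ‖x - y‖ := norm_sub_le _ _
        have h2 := hlow y
        have hq : a' + M + 2*M*‖x‖ ≤ (((n₀ + k : ℕ) : ℝ) - 2*M) * δ := by
          have h3 : (a' + M + 2*M*‖x‖)/δ ≤ ((n₀ + k : ℕ) : ℝ) - 2*M := by linarith
          have h4 : a' + M + 2*M*‖x‖ = ((a' + M + 2*M*‖x‖)/δ) * δ := by field_simp
          rw [h4]
          exact mul_le_mul_of_nonneg_right h3 hδ.le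
        have hprod : (((n₀ + k : ℕ) : ℝ) - 2*M) * δ ≤ (((n₀ + k : ℕ) : ℝ) - 2*M) * ‖x - y‖ :=
          mul_le_mul_of_nonneg_left hdist (by linarith)
        nlinarith [mul_le_mul_of_nonneg_left h1 (by linarith : (0:ℝ) ≤ 2*M)]
    · intro a ha
      exact Eventually.of_forall fun k => lt_of_le_of_lt (hFle _ (hn₀ k) x) ha
  -- integrability of linear-growth functions
  have hnormint : ∀ (κ : Measure (EuclideanSpace ℝ (Fin d))), IsProbabilityMeasure κ →
      Integrable (fun x => ‖x‖ ^ 2) κ → Integrable (fun x : EuclideanSpace ℝ (Fin d) => 1 + ‖x‖) κ := by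
    intro κ _ hκ
    have h1 : Integrable (fun x : EuclideanSpace ℝ (Fin d) => 2 + ‖x‖^2) κ :=
      (integrable_const 2).add hκ
    refine h1.mono ((continuous_const.add continuous_norm).aestronglyMeasurable)
      (Eventually.of_forall fun x => ?_)
    rw [Real.norm_eq_abs, Real.norm_eq_abs, abs_of_nonneg (by positivity),
      abs_of_nonneg (by positivity)]
    nlinarith [norm_nonneg x, sq_nonneg (‖x‖ - 1)]
  have hμ1 : Integrable (fun x : EuclideanSpace ℝ (Fin d) => 1 + ‖x‖) μ :=
    hnormint μ inferInstance hμ2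
  have hν1 : Integrable (fun x : EuclideanSpace ℝ (Fin d) => 1 + ‖x‖) ν :=
    hnormint ν inferInstance hν2
  have hFint : ∀ n : ℕ, 2*M ≤ n → ∀ (κ : Measure (EuclideanSpace ℝ (Fin d))),
      Integrable (fun x : EuclideanSpace ℝ (Fin d) => 1 + ‖x‖) κ → Integrable (F n) κ := by
    intro n hn κ hκ
    have hc : Continuous (F n) := (hFconv n hn).locallyLipschitz.continuous
    refine (hκ.const_mul (3*M+n)).mono hc.aestronglyMeasurable
      (Eventually.of_forall fun x => ?_)
    rw [Real.norm_eq_abs]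
    refine (hgrow n hn x).trans ?_
    rw [Real.norm_eq_abs, abs_of_nonneg]
    have hn0 : (0:ℝ) ≤ n := n.cast_nonneg
    nlinarith [norm_nonneg x, mul_nonneg hn0 (norm_nonneg x), mul_nonneg hM0 (norm_nonneg x)]
  -- conclusion
  have hineq : ∀ k : ℕ, ∫ x, F (n₀+k) x ∂μ ≤ ∫ x, f x ∂ν := by
    intro k
    refine le_trans (h (F (n₀+k)) (hFconv _ (hn₀ k)) ⟨3*M + (n₀+k : ℕ), hgrow _ (hn₀ k)⟩) ?_
    exact integral_mono (hFint _ (hn₀ k) ν hν1) hfν (fun x => hFle _ (hn₀ k) x)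
  have hlim : Tendsto (fun k : ℕ => ∫ x, F (n₀+k) x ∂μ) atTop (𝓝 (∫ x, f x ∂μ)) := by
    refine integral_tendsto_of_tendsto_of_monotone (fun k => hFint _ (hn₀ k) μ hμ1) hfμ
      (Eventually.of_forall fun x k l hkl => hFmono _ _ (hn₀ k) (by omega) x)
      (Eventually.of_forall fun x => hFtendsto x)
  exact le_of_tendsto hlim (Eventually.of_forall hineq)
end

section
/- Let μ be a Borel probability measure on ℝ^d with finite second moment, let f : ℝ^d → ℝ be a convex function, and let ∇f : ℝ^d → ℝ^d be a Borel measurable map with ∇f(x) ∈ ∂f(x) for every x, such that ∇f is square-integrable with respect to μ. Set ρ := (∇f)_# μ. Then the coupling (id, ∇f)_# μ is optimal for the squared 2-Wasserstein distance between μ and ρ; that is, W₂²(μ, ρ) = ∫ |x − ∇f(x)|² μ(dx). -/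
open MeasureTheory

theorem subgradient_pushforward_optimal {d : ℕ}
    (μ : Measure (EuclideanSpace ℝ (Fin d))) [IsProbabilityMeasure μ]
    (hμ2 : Integrable (fun x => ‖x‖ ^ 2) μ)
    (f : EuclideanSpace ℝ (Fin d) → ℝ) (hf : ConvexOn ℝ Set.univ f)
    (gradf : EuclideanSpace ℝ (Fin d) → EuclideanSpace ℝ (Fin d))
    (hgrad_meas : Measurable gradf)
    (hsub : ∀ x y, f x + inner ℝ (gradf x) (y - x) ≤ f y)
    (hgrad2 : Integrable (fun x => ‖gradf x‖ ^ 2) μ)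
    (ρ : Measure (EuclideanSpace ℝ (Fin d))) (hρ : ρ = μ.map gradf) :
    W2sq μ ρ = ∫ x, ‖x - gradf x‖ ^ 2 ∂μ := by
  classical
  -- continuity of f
  have hfc : Continuous f :=
    continuousOn_univ.mp (hf.continuousOn isOpen_univ)
  -- a dense sequence
  obtain ⟨s, hs⟩ : ∃ s : ℕ → EuclideanSpace ℝ (Fin d), DenseRange s :=
    ⟨TopologicalSpace.denseSeq _, TopologicalSpace.denseRange_denseSeq _⟩
  set g : ℕ → EuclideanSpace ℝ (Fin d) → ℝ :=
    fun n y => (inner ℝ (s n) y : ℝ) - f (s n) with hg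
  set fstar : EuclideanSpace ℝ (Fin d) → ℝ := fun y => ⨆ n, g n y with hfstar
  set h : EuclideanSpace ℝ (Fin d) → ℝ :=
    fun x => (inner ℝ x (gradf x) : ℝ) - f x with hh
  -- key subgradient inequality
  have hA : ∀ u x : EuclideanSpace ℝ (Fin d),
      (inner ℝ x (gradf u) : ℝ) - f x ≤ h u := by
    intro u x
    have h1 := hsub u x
    rw [inner_sub_right, real_inner_comm x (gradf u), real_inner_comm u (gradf u)] at h1
    simp only [hh]
    linarith
  have hBmem : ∀ u, BddAbove (Set.range fun n => g n (gradf u)) := by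
    intro u
    refine ⟨h u, ?_⟩
    rintro r ⟨n, rfl⟩
    exact hA u (s n)
  set B : Set (EuclideanSpace ℝ (Fin d)) :=
    {y | BddAbove (Set.range fun n => g n y)} with hB
  have hgmeas : ∀ n, Measurable (g n) := fun n =>
    ((continuous_const.inner continuous_id).sub continuous_const).measurable
  have hBmeas : MeasurableSet B := measurableSet_bddAbove_range hgmeas
  have hfstar_meas : Measurable fstar := Measurable.iSup hgmeas
  -- for y ∈ B, fstar y dominates all slopes
  have hD : ∀ y ∈ B, ∀ x, (inner ℝ x y : ℝ) - f x ≤ fstar y := by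
    intro y hy x
    have hclosed : IsClosed {x : EuclideanSpace ℝ (Fin d) |
        (inner ℝ x y : ℝ) - f x ≤ fstar y} :=
      isClosed_le ((continuous_id.inner continuous_const).sub hfc) continuous_const
    have hsubset : Set.range s ⊆
        {x : EuclideanSpace ℝ (Fin d) | (inner ℝ x y : ℝ) - f x ≤ fstar y} := by
      rintro _ ⟨n, rfl⟩
      exact le_ciSup hy n
    exact (hclosed.closure_subset_iff.mpr hsubset) (hs x)
  have hBeq : ∀ u, fstar (gradf u) = h u := by
    intro u
    refine le_antisymm (ciSup_le fun n => hA u (s n)) ?_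
    have := hD (gradf u) (hBmem u) u
    simp only [hh]
    linarith
  -- integrability facts
  have hinner_int : Integrable (fun x => (inner ℝ x (gradf x) : ℝ)) μ := by
    refine Integrable.mono' ((hμ2.add hgrad2).const_mul (1/2))
      (measurable_id.inner hgrad_meas).aestronglyMeasurable ?_
    filter_upwards with x
    have h1 := abs_real_inner_le_norm x (gradf x)
    have h2 : ‖x‖ * ‖gradf x‖ ≤ (‖x‖^2 + ‖gradf x‖^2)/2 := by
      nlinarith [sq_nonneg (‖x‖ - ‖gradf x‖)]
    rw [Real.norm_eq_abs]
    calc |(inner ℝ x (gradf x) : ℝ)| ≤ ‖x‖ * ‖gradf x‖ := h1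
      _ ≤ (‖x‖^2 + ‖gradf x‖^2)/2 := h2
      _ = 1/2 * (‖x‖^2 + ‖gradf x‖^2) := by ring
  have hf_int : Integrable f μ := by
    have hCint : Integrable (fun x => (|f 0| + ‖gradf 0‖^2/2)
        + (‖x‖^2 + (1/2) * ‖gradf x‖^2)) μ :=
      (integrable_const _).add (hμ2.add (hgrad2.const_mul _))
    refine hCint.mono' hfc.aestronglyMeasurable ?_
    filter_upwards with x
    have h1 := hsub 0 x
    have h2 := hsub x 0
    rw [sub_zero] at h1
    rw [zero_sub, inner_neg_right] at h2
    have e1 := abs_real_inner_le_norm (gradf 0) x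
    have e2 := abs_real_inner_le_norm (gradf x) x
    have q1 : ‖gradf 0‖ * ‖x‖ ≤ (‖gradf 0‖^2 + ‖x‖^2)/2 := by
      nlinarith [sq_nonneg (‖gradf 0‖ - ‖x‖)]
    have q2 : ‖gradf x‖ * ‖x‖ ≤ (‖gradf x‖^2 + ‖x‖^2)/2 := by
      nlinarith [sq_nonneg (‖gradf x‖ - ‖x‖)]
    rw [Real.norm_eq_abs, abs_le]
    have a1 := le_abs_self (f 0)
    have a2 := neg_abs_le (f 0)
    have b1 := le_abs_self ((inner ℝ (gradf 0) x : ℝ))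
    have b2 := neg_abs_le ((inner ℝ (gradf 0) x : ℝ))
    have c1 := le_abs_self ((inner ℝ (gradf x) x : ℝ))
    have c2 := neg_abs_le ((inner ℝ (gradf x) x : ℝ))
    constructor <;> nlinarith [sq_nonneg ‖x‖, sq_nonneg ‖gradf x‖, sq_nonneg ‖gradf 0‖]
  have hh_int : Integrable h μ := hinner_int.sub hf_int
  -- second moment of ρ
  have hρ2 : Integrable (fun y => ‖y‖^2) ρ := by
    rw [hρ]
    exact (integrable_map_measure (continuous_norm.pow 2).aestronglyMeasurable
      hgrad_meas.aemeasurable).mpr hgrad2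
  have hfstar_int_ρ : Integrable fstar ρ := by
    rw [hρ]
    refine (integrable_map_measure hfstar_meas.aestronglyMeasurable
      hgrad_meas.aemeasurable).mpr ?_
    have : (fstar ∘ gradf) = h := funext fun u => hBeq u
    rw [this]
    exact hh_int
  have hfstar_integral : ∫ y, fstar y ∂ρ = ∫ x, h x ∂μ := by
    rw [hρ, integral_map hgrad_meas.aemeasurable hfstar_meas.aestronglyMeasurable]
    exact integral_congr_ae (Filter.Eventually.of_forall fun u => hBeq u)
  -- the candidate coupling
  set π₀ : Measure (EuclideanSpace ℝ (Fin d) × EuclideanSpace ℝ (Fin d)) :=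
    μ.map (fun x => (x, gradf x)) with hπ₀
  have hmap_meas : Measurable (fun x : EuclideanSpace ℝ (Fin d) => (x, gradf x)) :=
    measurable_id.prodMk hgrad_meas
  have hfst : π₀.map Prod.fst = μ := by
    rw [hπ₀, Measure.map_map measurable_fst hmap_meas]
    have : (Prod.fst ∘ fun x : EuclideanSpace ℝ (Fin d) => (x, gradf x)) = id := rfl
    rw [this, Measure.map_id]
  have hsnd : π₀.map Prod.snd = ρ := by
    rw [hπ₀, Measure.map_map measurable_snd hmap_meas]
    have : (Prod.snd ∘ fun x : EuclideanSpace ℝ (Fin d) => (x, gradf x)) = gradf := rfl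
    rw [this, hρ]
  have hval : ∫ p, ‖p.1 - p.2‖^2 ∂π₀ = ∫ x, ‖x - gradf x‖^2 ∂μ := by
    rw [hπ₀, integral_map hmap_meas.aemeasurable (f := fun p => ‖p.1 - p.2‖ ^ 2)
      ((continuous_fst.sub continuous_snd).norm.pow 2).aestronglyMeasurable]
  -- the lower bound: every coupling has cost at least that of π₀
  have hlb : ∀ r ∈ { r : ℝ | ∃ π : Measure (EuclideanSpace ℝ (Fin d) ×
      EuclideanSpace ℝ (Fin d)),
      π.map Prod.fst = μ ∧ π.map Prod.snd = ρ ∧ r = ∫ p, ‖p.1 - p.2‖ ^ 2 ∂π },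
      ∫ x, ‖x - gradf x‖ ^ 2 ∂μ ≤ r := by
    rintro r ⟨π, hπ1, hπ2, rfl⟩
    have I1 : Integrable (fun p : EuclideanSpace ℝ (Fin d) ×
        EuclideanSpace ℝ (Fin d) => ‖p.1‖^2) π := by
      have h0 : Integrable (fun x => ‖x‖^2) (π.map Prod.fst) := hπ1.symm ▸ hμ2
      exact (integrable_map_measure (continuous_norm.pow 2).aestronglyMeasurable
        measurable_fst.aemeasurable).mp h0
    have I2 : Integrable (fun p : EuclideanSpace ℝ (Fin d) ×
        EuclideanSpace ℝ (Fin d) => ‖p.2‖^2) π := by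
      have h0 : Integrable (fun y => ‖y‖^2) (π.map Prod.snd) := hπ2.symm ▸ hρ2
      exact (integrable_map_measure (continuous_norm.pow 2).aestronglyMeasurable
        measurable_snd.aemeasurable).mp h0
    have I12 : Integrable (fun p : EuclideanSpace ℝ (Fin d) ×
        EuclideanSpace ℝ (Fin d) => (inner ℝ p.1 p.2 : ℝ)) π := by
      refine Integrable.mono' ((I1.add I2).const_mul (1/2))
        (continuous_inner.aestronglyMeasurable) ?_
      filter_upwards with p
      have h1 := abs_real_inner_le_norm p.1 p.2
      have h2 : ‖p.1‖ * ‖p.2‖ ≤ (‖p.1‖^2 + ‖p.2‖^2)/2 := by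
        nlinarith [sq_nonneg (‖p.1‖ - ‖p.2‖)]
      rw [Real.norm_eq_abs]
      calc |(inner ℝ p.1 p.2 : ℝ)| ≤ ‖p.1‖ * ‖p.2‖ := h1
        _ ≤ (‖p.1‖^2 + ‖p.2‖^2)/2 := h2
        _ = 1/2 * (‖p.1‖^2 + ‖p.2‖^2) := by ring
    have Iff2 : Integrable (fun p : EuclideanSpace ℝ (Fin d) ×
        EuclideanSpace ℝ (Fin d) => f p.1) π := by
      have h0 : Integrable f (π.map Prod.fst) := hπ1.symm ▸ hf_int
      exact (integrable_map_measure hfc.aestronglyMeasurable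
        measurable_fst.aemeasurable).mp h0
    have Ifs2 : Integrable (fun p : EuclideanSpace ℝ (Fin d) ×
        EuclideanSpace ℝ (Fin d) => fstar p.2) π := by
      have h0 : Integrable fstar (π.map Prod.snd) := hπ2.symm ▸ hfstar_int_ρ
      exact (integrable_map_measure hfstar_meas.aestronglyMeasurable
        measurable_snd.aemeasurable).mp h0
    -- the a.e. inequality
    have hnull : π (Prod.snd ⁻¹' Bᶜ) = 0 := by
      have e1 : π (Prod.snd ⁻¹' Bᶜ) = ρ Bᶜ := by
        rw [← hπ2, Measure.map_apply measurable_snd hBmeas.compl]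
      rw [e1, hρ, Measure.map_apply hgrad_meas hBmeas.compl]
      have e2 : gradf ⁻¹' Bᶜ = ∅ := by
        ext u
        simp only [Set.mem_preimage, Set.mem_compl_iff, Set.mem_empty_iff_false,
          iff_false, not_not]
        exact hBmem u
      rw [e2]
      simp
    have hae : ∀ᵐ p ∂π, (inner ℝ p.1 p.2 : ℝ) ≤ f p.1 + fstar p.2 := by
      refine ae_iff.mpr (measure_mono_null ?_ hnull)
      intro p hp
      simp only [Set.mem_setOf_eq] at hp
      by_contra hmem
      simp only [Set.mem_preimage, Set.mem_compl_iff, not_not] at hmem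
      exact hp (by linarith [hD p.2 hmem p.1])
    have key : ∫ p, (inner ℝ p.1 p.2 : ℝ) ∂π ≤ ∫ x, (inner ℝ x (gradf x) : ℝ) ∂μ := by
      calc ∫ p, (inner ℝ p.1 p.2 : ℝ) ∂π ≤ ∫ p, (f p.1 + fstar p.2) ∂π :=
            integral_mono_ae I12 (Iff2.add Ifs2) hae
        _ = (∫ p, f p.1 ∂π) + ∫ p, fstar p.2 ∂π := integral_add Iff2 Ifs2
        _ = (∫ x, f x ∂μ) + ∫ y, fstar y ∂ρ := by
            congr 1
            · rw [← hπ1, integral_map measurable_fst.aemeasurable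
                hfc.aestronglyMeasurable]
            · rw [← hπ2, integral_map measurable_snd.aemeasurable
                hfstar_meas.aestronglyMeasurable]
        _ = (∫ x, f x ∂μ) + ∫ x, h x ∂μ := by rw [hfstar_integral]
        _ = ∫ x, (f x + h x) ∂μ := (integral_add hf_int hh_int).symm
        _ = ∫ x, (inner ℝ x (gradf x) : ℝ) ∂μ := by
            refine integral_congr_ae (Filter.Eventually.of_forall fun x => ?_)
            simp only [hh]
            ring
    -- expansions of the squared norms
    have expand_π : ∫ p, ‖p.1 - p.2‖^2 ∂π
        = (∫ p, ‖p.1‖^2 ∂π) - 2 * (∫ p, (inner ℝ p.1 p.2 : ℝ) ∂π) + ∫ p, ‖p.2‖^2 ∂π := by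
      have e : ∀ p : EuclideanSpace ℝ (Fin d) × EuclideanSpace ℝ (Fin d),
          ‖p.1 - p.2‖^2 = ‖p.1‖^2 - 2 * (inner ℝ p.1 p.2 : ℝ) + ‖p.2‖^2 :=
        fun p => norm_sub_sq_real p.1 p.2
      have Ic : Integrable (fun p : EuclideanSpace ℝ (Fin d) ×
          EuclideanSpace ℝ (Fin d) => 2 * (inner ℝ p.1 p.2 : ℝ)) π := I12.const_mul 2
      have Isub : Integrable (fun p : EuclideanSpace ℝ (Fin d) ×
          EuclideanSpace ℝ (Fin d) => ‖p.1‖^2 - 2 * (inner ℝ p.1 p.2 : ℝ)) π := I1.sub Ic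
      rw [integral_congr_ae (Filter.Eventually.of_forall e),
        integral_add Isub I2, integral_sub I1 Ic, integral_const_mul]
    have expand_μ : ∫ x, ‖x - gradf x‖^2 ∂μ
        = (∫ x, ‖x‖^2 ∂μ) - 2 * (∫ x, (inner ℝ x (gradf x) : ℝ) ∂μ)
          + ∫ x, ‖gradf x‖^2 ∂μ := by
      have e : ∀ x : EuclideanSpace ℝ (Fin d),
          ‖x - gradf x‖^2 = ‖x‖^2 - 2 * (inner ℝ x (gradf x) : ℝ) + ‖gradf x‖^2 :=
        fun x => norm_sub_sq_real x (gradf x)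
      have Ic : Integrable (fun x : EuclideanSpace ℝ (Fin d) =>
          2 * (inner ℝ x (gradf x) : ℝ)) μ := hinner_int.const_mul 2
      have Isub : Integrable (fun x : EuclideanSpace ℝ (Fin d) =>
          ‖x‖^2 - 2 * (inner ℝ x (gradf x) : ℝ)) μ := hμ2.sub Ic
      rw [integral_congr_ae (Filter.Eventually.of_forall e),
        integral_add Isub hgrad2, integral_sub hμ2 Ic, integral_const_mul]
    have T1 : ∫ p, ‖p.1‖^2 ∂π = ∫ x, ‖x‖^2 ∂μ := by
      rw [← hπ1, integral_map measurable_fst.aemeasurable (f := fun x => ‖x‖ ^ 2)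
        (continuous_norm.pow 2).aestronglyMeasurable]
    have T2a : ∫ p, ‖p.2‖^2 ∂π = ∫ y, ‖y‖^2 ∂ρ := by
      rw [← hπ2, integral_map measurable_snd.aemeasurable (f := fun x => ‖x‖ ^ 2)
        (continuous_norm.pow 2).aestronglyMeasurable]
    have T2b : ∫ y, ‖y‖^2 ∂ρ = ∫ x, ‖gradf x‖^2 ∂μ := by
      rw [hρ, integral_map hgrad_meas.aemeasurable (f := fun x => ‖x‖ ^ 2)
        (continuous_norm.pow 2).aestronglyMeasurable]
    linarith [key, expand_π, expand_μ, T1, T2a, T2b]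
  rw [W2sq]
  exact IsLeast.csInf_eq ⟨⟨π₀, hfst, hsnd, hval.symm⟩, hlb⟩
end
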